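/- arXiv:0909.2172 — 2 statements merged into one kernel-verified Lean document; each statement's English description precedes it below -/
import Mathlib

section
/- (Proposition P2) Assume ν̄ᵢ > 0 for all i, U is positive definite and X is positive semidefinite, so that M(X) = Σ_{I⊆{1,…,m}} η_I² N_I (U + Bᵀ X B) N_I is positive definite. With K̄_X = −Aᵀ X B N̄ M(X)⁻¹, for every real n×m matrix K one has φ(K̄_X, X) ⪯ φ(K, X) in the Loewner order; consequently the Loewner minimum g_{N̄}(X) = min_K φ(K,X) exists and equals Π_c(X) = Aᵀ X A + W − Aᵀ X B N̄ M(X)⁻¹ N̄ Bᵀ X A. -/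
open Matrix

/-- The scalar η_I = √(∏_{i∈I} ν̄ᵢ · ∏_{i∉I}(1−ν̄ᵢ)). -/
noncomputable def eta {m : ℕ} (ν : Fin m → ℝ) (I : Finset (Fin m)) : ℝ :=
  Real.sqrt ((∏ i ∈ I, ν i) * (∏ i ∈ Iᶜ, (1 - ν i)))

/-- The m×m diagonal 0/1 matrix N_I whose i-th diagonal entry is 1 exactly when i ∈ I. -/
def NI {m : ℕ} (I : Finset (Fin m)) : Matrix (Fin m) (Fin m) ℝ :=
  Matrix.diagonal fun i => if i ∈ I then 1 else 0

/-- φ(K,X) = Σ_{I⊆{1,…,m}} η_I² (F_I(K) X F_I(K)ᵀ + V_I(K)), where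
F_I(K) = Aᵀ + K N_I Bᵀ and V_I(K) = W + K N_I U N_I Kᵀ. -/
noncomputable def phi {m n : ℕ} (ν : Fin m → ℝ) (A W : Matrix (Fin n) (Fin n) ℝ)
    (B : Matrix (Fin n) (Fin m) ℝ) (U : Matrix (Fin m) (Fin m) ℝ)
    (K : Matrix (Fin n) (Fin m) ℝ) (X : Matrix (Fin n) (Fin n) ℝ) :
    Matrix (Fin n) (Fin n) ℝ :=
  ∑ I : Finset (Fin m), (eta ν I) ^ 2 •
    ((Aᵀ + K * NI I * Bᵀ) * X * (Aᵀ + K * NI I * Bᵀ)ᵀ + (W + K * NI I * U * NI I * Kᵀ))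

/-- M(X) = Σ_{I⊆{1,…,m}} η_I² N_I (U + Bᵀ X B) N_I. -/
noncomputable def Mop {m n : ℕ} (ν : Fin m → ℝ) (B : Matrix (Fin n) (Fin m) ℝ)
    (U : Matrix (Fin m) (Fin m) ℝ) (X : Matrix (Fin n) (Fin n) ℝ) :
    Matrix (Fin m) (Fin m) ℝ :=
  ∑ I : Finset (Fin m), (eta ν I) ^ 2 • (NI I * (U + Bᵀ * X * B) * NI I)

/-- The modified algebraic Riccati operator
Π_c(X) = Aᵀ X A + W − Aᵀ X B N̄ M(X)⁻¹ N̄ Bᵀ X A, where N̄ = diag(ν̄₁,…,ν̄ₘ). -/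
noncomputable def Pic {m n : ℕ} (ν : Fin m → ℝ) (A W : Matrix (Fin n) (Fin n) ℝ)
    (B : Matrix (Fin n) (Fin m) ℝ) (U : Matrix (Fin m) (Fin m) ℝ)
    (X : Matrix (Fin n) (Fin n) ℝ) : Matrix (Fin n) (Fin n) ℝ :=
  Aᵀ * X * A + W -
    Aᵀ * X * B * Matrix.diagonal ν * (Mop ν B U X)⁻¹ * Matrix.diagonal ν * Bᵀ * X * A

/- ### Auxiliary lemmas -/

lemma sum_prod_compl {m : ℕ} (a b : Fin m → ℝ) :
    ∑ I : Finset (Fin m), (∏ i ∈ I, a i) * (∏ i ∈ Iᶜ, b i) = ∏ i, (a i + b i) := by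
  rw [Finset.prod_add, ← Finset.powerset_univ]
  exact Finset.sum_congr rfl fun t ht => by rw [Finset.compl_eq_univ_sdiff]

lemma eta_sq {m : ℕ} (ν : Fin m → ℝ) (hν : ∀ i, ν i ∈ Set.Ioc (0 : ℝ) 1)
    (I : Finset (Fin m)) :
    (eta ν I) ^ 2 = (∏ i ∈ I, ν i) * (∏ i ∈ Iᶜ, (1 - ν i)) := by
  unfold eta
  rw [Real.sq_sqrt]
  exact mul_nonneg (Finset.prod_nonneg fun i _ => (hν i).1.le)
    (Finset.prod_nonneg fun i _ => by linarith [(hν i).2])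

lemma sum_eta_sq {m : ℕ} (ν : Fin m → ℝ) (hν : ∀ i, ν i ∈ Set.Ioc (0 : ℝ) 1) :
    ∑ I : Finset (Fin m), (eta ν I) ^ 2 = 1 := by
  have h := sum_prod_compl ν (fun i => 1 - ν i)
  simp only [add_sub_cancel, Finset.prod_const_one] at h
  rw [← h]
  exact Finset.sum_congr rfl fun I _ => eta_sq ν hν I

lemma NI_transpose {m : ℕ} (I : Finset (Fin m)) : (NI I)ᵀ = NI I := by
  simp [NI, Matrix.diagonal_transpose]

lemma sum_eta_sq_NI {m : ℕ} (ν : Fin m → ℝ) (hν : ∀ i, ν i ∈ Set.Ioc (0 : ℝ) 1) :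
    ∑ I : Finset (Fin m), (eta ν I) ^ 2 • NI I = Matrix.diagonal ν := by
  ext i j
  rw [Matrix.sum_apply]
  rcases eq_or_ne i j with h | h
  · subst h
    have key : ∀ I : Finset (Fin m),
        ((eta ν I) ^ 2 • NI I) i i
          = (∏ k ∈ I, ν k) * (∏ k ∈ Iᶜ, (if k = i then 0 else 1 - ν k)) := by
      intro I
      rw [Matrix.smul_apply, eta_sq ν hν I]
      simp only [NI, Matrix.diagonal_apply_eq, smul_eq_mul]
      by_cases hi : i ∈ I
      · simp only [hi, if_true, mul_one]
        congr 1
        refine Finset.prod_congr rfl fun k hk => ?_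
        have hk' : k ≠ i := by rintro rfl; exact (Finset.mem_compl.mp hk) hi
        simp [hk']
      · simp only [hi, if_false, mul_zero]
        rw [Finset.prod_eq_zero (Finset.mem_compl.mpr hi) (by simp)]
        ring
    rw [Finset.sum_congr rfl fun I _ => key I,
      sum_prod_compl ν (fun k => if k = i then 0 else 1 - ν k)]
    rw [Finset.prod_congr rfl (g := fun k => if k = i then ν i else 1)
      (fun k _ => by by_cases hk : k = i <;> simp [hk])]
    simp
  · simp [NI, Matrix.diagonal_apply_ne _ h, Matrix.smul_apply]

lemma posSemidef_smul' {k : ℕ} {A : Matrix (Fin k) (Fin k) ℝ} (hA : A.PosSemidef)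
    {c : ℝ} (hc : 0 ≤ c) : (c • A).PosSemidef := by
  constructor
  · unfold Matrix.IsHermitian
    rw [Matrix.conjTranspose_smul, hA.1.eq]
    simp
  · exact (hA.smul hc).2

lemma posDef_smul' {k : ℕ} {A : Matrix (Fin k) (Fin k) ℝ} (hA : A.PosDef)
    {c : ℝ} (hc : 0 < c) : (c • A).PosDef := by
  constructor
  · unfold Matrix.IsHermitian
    rw [Matrix.conjTranspose_smul, hA.1.eq]
    simp
  · exact (hA.smul hc).2

/-- Expansion of φ as a quadratic function of K. -/
lemma phi_expand {m n : ℕ} (ν : Fin m → ℝ) (hν : ∀ i, ν i ∈ Set.Ioc (0 : ℝ) 1)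
    (A W : Matrix (Fin n) (Fin n) ℝ) (B : Matrix (Fin n) (Fin m) ℝ)
    (U : Matrix (Fin m) (Fin m) ℝ) (K : Matrix (Fin n) (Fin m) ℝ)
    (X : Matrix (Fin n) (Fin n) ℝ) (hXs : Xᵀ = X) :
    phi ν A W B U K X =
      Aᵀ * X * A + W + (Aᵀ * X * B * Matrix.diagonal ν) * Kᵀ
        + K * (Matrix.diagonal ν * Bᵀ * X * A) + K * Mop ν B U X * Kᵀ := by
  unfold phi
  have expand : ∀ I : Finset (Fin m),
      (eta ν I) ^ 2 •
        ((Aᵀ + K * NI I * Bᵀ) * X * (Aᵀ + K * NI I * Bᵀ)ᵀ + (W + K * NI I * U * NI I * Kᵀ))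
      = (eta ν I) ^ 2 • (Aᵀ * X * A + W)
        + (Aᵀ * X * B) * ((eta ν I) ^ 2 • NI I) * Kᵀ
        + K * ((eta ν I) ^ 2 • NI I) * (Bᵀ * X * A)
        + K * ((eta ν I) ^ 2 • (NI I * (U + Bᵀ * X * B) * NI I)) * Kᵀ := by
    intro I
    rw [Matrix.mul_smul, Matrix.smul_mul, Matrix.mul_smul, Matrix.smul_mul,
      Matrix.mul_smul, Matrix.smul_mul, ← smul_add, ← smul_add, ← smul_add]
    congr 1
    simp only [Matrix.transpose_add, Matrix.transpose_mul, Matrix.transpose_transpose,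
      NI_transpose, hXs, Matrix.add_mul, Matrix.mul_add, Matrix.mul_assoc]
    abel
  rw [Finset.sum_congr rfl fun I _ => expand I]
  simp only [Finset.sum_add_distrib]
  rw [← Finset.sum_smul, sum_eta_sq ν hν, one_smul]
  have h1 : ∑ I : Finset (Fin m), (Aᵀ * X * B) * ((eta ν I) ^ 2 • NI I) * Kᵀ
      = (Aᵀ * X * B * Matrix.diagonal ν) * Kᵀ := by
    rw [← Matrix.sum_mul, ← Matrix.mul_sum, sum_eta_sq_NI ν hν, Matrix.mul_assoc]
  have h2 : ∑ I : Finset (Fin m), K * ((eta ν I) ^ 2 • NI I) * (Bᵀ * X * A)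
      = K * (Matrix.diagonal ν * Bᵀ * X * A) := by
    rw [← Matrix.sum_mul, ← Matrix.mul_sum, sum_eta_sq_NI ν hν]
    simp [Matrix.mul_assoc]
  have h3 : ∑ I : Finset (Fin m), K * ((eta ν I) ^ 2 • (NI I * (U + Bᵀ * X * B) * NI I)) * Kᵀ
      = K * Mop ν B U X * Kᵀ := by
    rw [← Matrix.sum_mul, ← Matrix.mul_sum]; rfl
  rw [h1, h2, h3]


/-- Proposition P2: with ν̄ᵢ ∈ (0,1], U positive definite,
W positive semidefinite and X positive semidefinite, M(X) is positive definite,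
K̄_X = −Aᵀ X B N̄ M(X)⁻¹ is a Loewner minimizer of K ↦ φ(K,X), and the minimum
value g_{N̄}(X) = φ(K̄_X, X) equals Π_c(X). -/
theorem phi_min_eq_Pic (m n : ℕ) (hm : 0 < m) (hn : 0 < n) (ν : Fin m → ℝ)
    (hν : ∀ i, ν i ∈ Set.Ioc (0 : ℝ) 1)
    (A W : Matrix (Fin n) (Fin n) ℝ) (B : Matrix (Fin n) (Fin m) ℝ)
    (U : Matrix (Fin m) (Fin m) ℝ) (hW : W.PosSemidef) (hU : U.PosDef)
    (X : Matrix (Fin n) (Fin n) ℝ) (hX : X.PosSemidef) :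
    (Mop ν B U X).PosDef ∧
    (∀ K : Matrix (Fin n) (Fin m) ℝ,
      (phi ν A W B U K X -
        phi ν A W B U (-(Aᵀ * X * B * Matrix.diagonal ν * (Mop ν B U X)⁻¹)) X).PosSemidef) ∧
    phi ν A W B U (-(Aᵀ * X * B * Matrix.diagonal ν * (Mop ν B U X)⁻¹)) X =
      Pic ν A W B U X := by
  have hXs : Xᵀ = X := by
    rw [← Matrix.conjTranspose_eq_transpose_of_trivial]; exact hX.1
  have hQ : (U + Bᵀ * X * B).PosDef := by
    refine hU.add_posSemidef ?_
    have h := hX.mul_mul_conjTranspose_same Bᵀ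
    simpa using h
  have hM : (Mop ν B U X).PosDef := by
    unfold Mop
    rw [← Finset.sum_erase_add _ _ (Finset.mem_univ (Finset.univ : Finset (Fin m)))]
    refine Matrix.PosDef.posSemidef_add ?_ ?_
    · refine Finset.sum_induction _ _ (fun a b ha hb => ha.add hb) Matrix.PosSemidef.zero ?_
      intro I _
      refine posSemidef_smul' ?_ (sq_nonneg _)
      have h := hQ.posSemidef.mul_mul_conjTranspose_same (NI I)
      simpa [Matrix.conjTranspose_eq_transpose_of_trivial, NI_transpose] using h
    · have hη : (0 : ℝ) < (eta ν Finset.univ) ^ 2 := by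
        rw [eta_sq ν hν]
        simp only [Finset.compl_univ, Finset.prod_empty, mul_one]
        exact Finset.prod_pos fun i _ => (hν i).1
      have hNI : NI (Finset.univ : Finset (Fin m)) = (1 : Matrix (Fin m) (Fin m) ℝ) := by
        simp [NI]
      rw [hNI, Matrix.one_mul, Matrix.mul_one]
      exact posDef_smul' hQ hη
  set M := Mop ν B U X with hMdef
  have hdet : IsUnit M.det := hM.det_pos.ne'.isUnit
  have hMsym : Mᵀ = M := by
    rw [← Matrix.conjTranspose_eq_transpose_of_trivial]; exact hM.1
  have hMinvT : (M⁻¹)ᵀ = M⁻¹ := by rw [Matrix.transpose_nonsing_inv, hMsym]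
  have hval : phi ν A W B U (-(Aᵀ * X * B * Matrix.diagonal ν * M⁻¹)) X
      = Pic ν A W B U X := by
    rw [phi_expand ν hν A W B U _ X hXs]
    unfold Pic
    rw [← hMdef]
    simp only [Matrix.transpose_neg, Matrix.transpose_mul, Matrix.transpose_transpose,
      Matrix.diagonal_transpose, hMinvT, hXs, Matrix.neg_mul, Matrix.mul_neg, neg_neg,
      Matrix.mul_assoc, Matrix.mul_nonsing_inv_cancel_left, Matrix.nonsing_inv_mul_cancel_left,
      hdet]
    abel
  refine ⟨hM, ?_, hval⟩
  intro K
  have hdiff : phi ν A W B U K X - phi ν A W B U (-(Aᵀ * X * B * Matrix.diagonal ν * M⁻¹)) X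
      = (K + Aᵀ * X * B * Matrix.diagonal ν * M⁻¹) * M
          * (K + Aᵀ * X * B * Matrix.diagonal ν * M⁻¹)ᵀ := by
    rw [phi_expand ν hν A W B U K X hXs, phi_expand ν hν A W B U _ X hXs]
    rw [← hMdef]
    simp only [Matrix.transpose_add, Matrix.transpose_neg, Matrix.transpose_mul,
      Matrix.transpose_transpose, Matrix.diagonal_transpose, hMinvT, hXs,
      Matrix.neg_mul, Matrix.mul_neg, neg_neg, Matrix.add_mul, Matrix.mul_add,
      Matrix.mul_assoc, Matrix.mul_nonsing_inv_cancel_left, Matrix.nonsing_inv_mul_cancel_left,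
      hdet]
    abel
  rw [hdiff]
  have h := hM.posSemidef.mul_mul_conjTranspose_same (K + Aᵀ * X * B * Matrix.diagonal ν * M⁻¹)
  simpa [Matrix.conjTranspose_eq_transpose_of_trivial] using h
end

section
/- (Lemma L1, part b) Let 𝓛(Y) = Σ_{I⊆{1,…,m}} η_I² F_I Y F_Iᵀ for fixed real n×n matrices F_I, and suppose there exists a positive definite n×n matrix Ȳ with 𝓛(Ȳ) ≺ Ȳ. Let U₀ be a positive semidefinite n×n matrix and define Y_{k+1} = 𝓛(Y_k) + U₀ from a positive semidefinite initial matrix Y₀. Then the sequence (Y_k) is bounded; in fact there exist r ∈ [0,1) and reals m_{Y₀}, m_{U₀} ≥ 0 such that Y_k ⪯ (m_{Y₀} rᵏ + m_{U₀} (1 − rᵏ)/(1 − r)) Ȳ for every k ∈ ℕ. -/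
open Matrix

/-- The linear operator 𝓛(Y) = Σ_{I⊆{1,…,m}} η_I² F_I Y F_Iᵀ. -/
noncomputable def Lop {m n : ℕ} (ν : Fin m → ℝ)
    (F : Finset (Fin m) → Matrix (Fin n) (Fin n) ℝ)
    (Y : Matrix (Fin n) (Fin n) ℝ) : Matrix (Fin n) (Fin n) ℝ :=
  ∑ I : Finset (Fin m), (eta ν I) ^ 2 • (F I * Y * (F I)ᵀ)

section Aux

variable {m n : ℕ}

lemma psd_smul {A : Matrix (Fin n) (Fin n) ℝ} (hA : A.PosSemidef) {c : ℝ} (hc : 0 ≤ c) :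
    (c • A).PosSemidef := by
  exact hA.smul hc

lemma psd_add {A B : Matrix (Fin n) (Fin n) ℝ} (hA : A.PosSemidef) (hB : B.PosSemidef) :
    (A + B).PosSemidef := by
  exact hA.add hB

lemma spectral_lower {A : Matrix (Fin n) (Fin n) ℝ} (hA : A.IsHermitian) {c : ℝ}
    (hc : ∀ i, c ≤ hA.eigenvalues i) : (A - c • 1).PosSemidef := by
  have hU : (hA.eigenvectorUnitary : Matrix (Fin n) (Fin n) ℝ) *
      (star (hA.eigenvectorUnitary : Matrix (Fin n) (Fin n) ℝ)) = 1 :=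
    (Matrix.mem_unitaryGroup_iff).mp (hA.eigenvectorUnitary).2
  have key : A - c • 1 = (hA.eigenvectorUnitary : Matrix (Fin n) (Fin n) ℝ) *
      diagonal (fun i => hA.eigenvalues i - c) *
      (hA.eigenvectorUnitary : Matrix (Fin n) (Fin n) ℝ)ᴴ := by
    have hd : diagonal (fun i => hA.eigenvalues i - c)
        = diagonal (RCLike.ofReal ∘ hA.eigenvalues) - c • (1 : Matrix (Fin n) (Fin n) ℝ) := by
      ext i j
      rcases eq_or_ne i j with h | h <;>
        simp [Matrix.diagonal_apply, Matrix.one_apply, h]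
    rw [hd, Matrix.mul_sub, Matrix.sub_mul]
    have hs := hA.spectral_theorem
    rw [Unitary.conjStarAlgAut_apply] at hs
    rw [show (star (hA.eigenvectorUnitary : Matrix (Fin n) (Fin n) ℝ))
        = (hA.eigenvectorUnitary : Matrix (Fin n) (Fin n) ℝ)ᴴ from rfl] at hs
    rw [← hs]
    congr 1
    rw [Matrix.mul_smul, Matrix.smul_mul, mul_one]
    rw [show (hA.eigenvectorUnitary : Matrix (Fin n) (Fin n) ℝ)ᴴ
        = (star (hA.eigenvectorUnitary : Matrix (Fin n) (Fin n) ℝ)) from rfl, hU]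
  rw [key]
  exact (Matrix.PosSemidef.diagonal (fun i => by simpa using hc i)).mul_mul_conjTranspose_same _

lemma spectral_upper {A : Matrix (Fin n) (Fin n) ℝ} (hA : A.IsHermitian) {c : ℝ}
    (hc : ∀ i, hA.eigenvalues i ≤ c) : (c • 1 - A).PosSemidef := by
  have hU : (hA.eigenvectorUnitary : Matrix (Fin n) (Fin n) ℝ) *
      (star (hA.eigenvectorUnitary : Matrix (Fin n) (Fin n) ℝ)) = 1 :=
    (Matrix.mem_unitaryGroup_iff).mp (hA.eigenvectorUnitary).2
  have key : c • 1 - A = (hA.eigenvectorUnitary : Matrix (Fin n) (Fin n) ℝ) *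
      diagonal (fun i => c - hA.eigenvalues i) *
      (hA.eigenvectorUnitary : Matrix (Fin n) (Fin n) ℝ)ᴴ := by
    have hd : diagonal (fun i => c - hA.eigenvalues i)
        = c • (1 : Matrix (Fin n) (Fin n) ℝ) - diagonal (RCLike.ofReal ∘ hA.eigenvalues) := by
      ext i j
      rcases eq_or_ne i j with h | h <;>
        simp [Matrix.diagonal_apply, Matrix.one_apply, h]
    rw [hd, Matrix.mul_sub, Matrix.sub_mul]
    have hs := hA.spectral_theorem
    rw [Unitary.conjStarAlgAut_apply] at hs
    rw [show (star (hA.eigenvectorUnitary : Matrix (Fin n) (Fin n) ℝ))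
        = (hA.eigenvectorUnitary : Matrix (Fin n) (Fin n) ℝ)ᴴ from rfl] at hs
    rw [← hs]
    congr 1
    rw [Matrix.mul_smul, Matrix.smul_mul, mul_one]
    rw [show (hA.eigenvectorUnitary : Matrix (Fin n) (Fin n) ℝ)ᴴ
        = (star (hA.eigenvectorUnitary : Matrix (Fin n) (Fin n) ℝ)) from rfl, hU]
  rw [key]
  exact (Matrix.PosSemidef.diagonal (fun i => by simpa using hc i)).mul_mul_conjTranspose_same _

lemma Lop_psd (ν : Fin m → ℝ) (F : Finset (Fin m) → Matrix (Fin n) (Fin n) ℝ)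
    {Y : Matrix (Fin n) (Fin n) ℝ} (hY : Y.PosSemidef) : (Lop ν F Y).PosSemidef := by
  unfold Lop
  apply Finset.sum_induction _ _ (fun a b ha hb => psd_add ha hb) Matrix.PosSemidef.zero
  intro I _
  apply psd_smul _ (sq_nonneg _)
  have h := hY.mul_mul_conjTranspose_same (F I)
  simpa [Matrix.conjTranspose_eq_transpose_of_trivial] using h

lemma Lop_sub (ν : Fin m → ℝ) (F : Finset (Fin m) → Matrix (Fin n) (Fin n) ℝ)
    (X Z : Matrix (Fin n) (Fin n) ℝ) :
    Lop ν F (X - Z) = Lop ν F X - Lop ν F Z := by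
  simp [Lop, Matrix.mul_sub, Matrix.sub_mul, smul_sub, Finset.sum_sub_distrib]

lemma Lop_smul (ν : Fin m → ℝ) (F : Finset (Fin m) → Matrix (Fin n) (Fin n) ℝ)
    (a : ℝ) (X : Matrix (Fin n) (Fin n) ℝ) :
    Lop ν F (a • X) = a • Lop ν F X := by
  simp only [Lop, Finset.smul_sum, Matrix.mul_smul, Matrix.smul_mul]
  congr 1; ext I
  rw [smul_comm]

end Aux

/-- Lemma L1, part b: if Ȳ ≻ 0 and 𝓛(Ȳ) ≺ Ȳ, U₀ ⪰ 0 and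
Y_{k+1} = 𝓛(Y_k) + U₀ with Y₀ ⪰ 0, then the sequence (Y_k) is bounded:
there exist r ∈ [0,1) and m_{Y₀}, m_{U₀} ≥ 0 with
Y_k ⪯ (m_{Y₀} rᵏ + m_{U₀} (1 − rᵏ)/(1 − r)) Ȳ for all k. -/
theorem Lop_affine_iterate_bounded (m n : ℕ) (hm : 0 < m) (hn : 0 < n) (ν : Fin m → ℝ)
    (hν : ∀ i, ν i ∈ Set.Icc (0 : ℝ) 1)
    (F : Finset (Fin m) → Matrix (Fin n) (Fin n) ℝ)
    (Ybar : Matrix (Fin n) (Fin n) ℝ) (hYbar : Ybar.PosDef)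
    (hL : (Ybar - Lop ν F Ybar).PosDef)
    (U₀ : Matrix (Fin n) (Fin n) ℝ) (hU₀ : U₀.PosSemidef)
    (Y : ℕ → Matrix (Fin n) (Fin n) ℝ) (hY0 : (Y 0).PosSemidef)
    (hYrec : ∀ k : ℕ, Y (k + 1) = Lop ν F (Y k) + U₀) :
    ∃ r mY mU : ℝ, 0 ≤ r ∧ r < 1 ∧ 0 ≤ mY ∧ 0 ≤ mU ∧
      ∀ k : ℕ,
        ((mY * r ^ k + mU * (1 - r ^ k) / (1 - r)) • Ybar - Y k).PosSemidef := by
  haveI : Nonempty (Fin n) := Fin.pos_iff_nonempty.mp hn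
  -- lower spectral bound for D = Ybar - Lop Ybar
  set c₁ : ℝ := Finset.univ.inf' Finset.univ_nonempty hL.1.eigenvalues with hc₁def
  have hc₁pos : 0 < c₁ := by
    rw [hc₁def, Finset.lt_inf'_iff]
    exact fun i _ => hL.eigenvalues_pos i
  have hDlow : ((Ybar - Lop ν F Ybar) - c₁ • 1).PosSemidef :=
    spectral_lower hL.1 (fun i => Finset.inf'_le _ (Finset.mem_univ i))
  -- upper spectral bound for Ybar
  set M₁ : ℝ := Finset.univ.sup' Finset.univ_nonempty hYbar.1.eigenvalues with hM₁def
  have hM₁pos : 0 < M₁ := by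
    obtain ⟨i⟩ := (inferInstance : Nonempty (Fin n))
    exact lt_of_lt_of_le (hYbar.eigenvalues_pos i) (Finset.le_sup' _ (Finset.mem_univ i))
  have hYup : (M₁ • 1 - Ybar).PosSemidef :=
    spectral_upper hYbar.1 (fun i => Finset.le_sup' _ (Finset.mem_univ i))
  -- lower spectral bound for Ybar
  set c₂ : ℝ := Finset.univ.inf' Finset.univ_nonempty hYbar.1.eigenvalues with hc₂def
  have hc₂pos : 0 < c₂ := by
    rw [hc₂def, Finset.lt_inf'_iff]
    exact fun i _ => hYbar.eigenvalues_pos i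
  have hYlow : (Ybar - c₂ • 1).PosSemidef :=
    spectral_lower hYbar.1 (fun i => Finset.inf'_le _ (Finset.mem_univ i))
  -- any psd matrix is dominated by a multiple of Ybar
  have dom : ∀ X : Matrix (Fin n) (Fin n) ℝ, X.PosSemidef →
      ∃ mX : ℝ, 0 ≤ mX ∧ (mX • Ybar - X).PosSemidef := by
    intro X hX
    set MX : ℝ := Finset.univ.sup' Finset.univ_nonempty hX.1.eigenvalues with hMXdef
    have hMX0 : 0 ≤ MX := by
      obtain ⟨i⟩ := (inferInstance : Nonempty (Fin n))
      exact le_trans (hX.eigenvalues_nonneg i) (Finset.le_sup' _ (Finset.mem_univ i))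
    have hXup : (MX • 1 - X).PosSemidef :=
      spectral_upper hX.1 (fun i => Finset.le_sup' _ (Finset.mem_univ i))
    refine ⟨MX / c₂, div_nonneg hMX0 hc₂pos.le, ?_⟩
    have hXc : (MX / c₂) • (c₂ • (1 : Matrix (Fin n) (Fin n) ℝ)) = MX • 1 := by
      rw [smul_smul, div_mul_cancel₀ _ hc₂pos.ne']
    have e : (MX / c₂) • Ybar - X
        = (MX / c₂) • (Ybar - c₂ • 1) + ((MX / c₂) • (c₂ • (1 : Matrix (Fin n) (Fin n) ℝ)) - X) := by
      module
    rw [e, hXc]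
    exact psd_add (psd_smul hYlow (div_nonneg hMX0 hc₂pos.le)) hXup
  -- the contraction factor
  set ε : ℝ := min (c₁ / M₁) 1 with hεdef
  have hε0 : 0 < ε := lt_min (div_pos hc₁pos hM₁pos) one_pos
  have hε1 : ε ≤ 1 := min_le_right _ _
  set r : ℝ := 1 - ε with hrdef
  have hr0 : 0 ≤ r := by simp [hrdef, hε1]
  have hr1 : r < 1 := by simp [hrdef, hε0]
  have key : (r • Ybar - Lop ν F Ybar).PosSemidef := by
    have hcoef : 0 ≤ c₁ - ε * M₁ := by
      have : ε ≤ c₁ / M₁ := min_le_left _ _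
      have := (le_div_iff₀ hM₁pos).mp this
      linarith
    have e : r • Ybar - Lop ν F Ybar
        = ((Ybar - Lop ν F Ybar) - c₁ • 1) + (c₁ - ε * M₁) • (1 : Matrix (Fin n) (Fin n) ℝ)
          + ε • (M₁ • 1 - Ybar) := by
      rw [hrdef]
      module
    rw [e]
    exact psd_add (psd_add hDlow (psd_smul Matrix.PosSemidef.one hcoef)) (psd_smul hYup hε0.le)
  obtain ⟨mY, hmY0, hmY2⟩ := dom (Y 0) hY0
  obtain ⟨mU, hmU0, hmU2⟩ := dom U₀ hU₀
  have h1r : (0:ℝ) < 1 - r := by simpa [hrdef] using hε0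
  refine ⟨r, mY, mU, hr0, hr1, hmY0, hmU0, ?_⟩
  intro k
  induction k with
  | zero => simpa using hmY2
  | succ k ih =>
    set a : ℝ := mY * r ^ k + mU * (1 - r ^ k) / (1 - r) with hadef
    have ha : 0 ≤ a := by
      rw [hadef]
      have h1 : 0 ≤ r ^ k := pow_nonneg hr0 _
      have h2 : r ^ k ≤ 1 := pow_le_one₀ hr0 hr1.le
      have h3 : 0 ≤ mY * r ^ k := mul_nonneg hmY0 h1
      have h4 : 0 ≤ mU * (1 - r ^ k) / (1 - r) :=
        div_nonneg (mul_nonneg hmU0 (by linarith)) h1r.le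
      linarith
    have harec : mY * r ^ (k + 1) + mU * (1 - r ^ (k + 1)) / (1 - r) = r * a + mU := by
      rw [hadef]
      field_simp
      ring
    have e : (mY * r ^ (k + 1) + mU * (1 - r ^ (k + 1)) / (1 - r)) • Ybar - Y (k + 1)
        = a • (r • Ybar - Lop ν F Ybar) + Lop ν F (a • Ybar - Y k) + (mU • Ybar - U₀) := by
      rw [harec, hYrec k, Lop_sub, Lop_smul]
      module
    rw [e]
    exact psd_add (psd_add (psd_smul key ha) (Lop_psd ν F ih)) hmU2
end
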